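/- arXiv:math/0101160 — 9 statements merged into one kernel-verified Lean document; each statement's English description precedes it below -/
import Mathlib

section
/- Let R̂ be the 4×4 matrix with rows (1, h, -h, h₃), (0, 0, 1, h), (0, 1, 0, -h), (0, 0, 0, 1) over a field of characteristic 0. Then (R̂ - I)²(R̂ + I) = 0. Moreover, if h₃ ≠ -h², then (R̂ - I)(R̂ + I) ≠ 0, so the cubic is the minimal polynomial relation of this form. -/
set_option maxHeartbeats 1000000

theorem one_fin_four' {α} [Zero α] [One α] :
    (1 : Matrix (Fin 4) (Fin 4) α) = !![1,0,0,0; 0,1,0,0; 0,0,1,0; 0,0,0,1] := by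
  ext i j
  fin_cases i <;> fin_cases j <;> rfl

theorem stmt1 (K : Type*) [Field K] [CharZero K] (h h₃ : K)
    (Rhat : Matrix (Fin 4) (Fin 4) K)
    (hR : Rhat = !![1, h, -h, h₃; 0, 0, 1, h; 0, 1, 0, -h; 0, 0, 0, 1]) :
    (Rhat - 1) ^ 2 * (Rhat + 1) = 0 ∧
      (h₃ ≠ -h ^ 2 → (Rhat - 1) * (Rhat + 1) ≠ 0) := by
  subst hR
  have h1 : (!![1, h, -h, h₃; 0, 0, 1, h; 0, 1, 0, -h; 0, 0, 0, 1] - 1 : Matrix (Fin 4) (Fin 4) K)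
      = !![0, h, -h, h₃; 0, -1, 1, h; 0, 1, -1, -h; 0, 0, 0, 0] := by
    rw [one_fin_four']
    ext i j
    fin_cases i <;> fin_cases j <;> simp [Matrix.vecHead, Matrix.vecTail]
  have h2 : (!![1, h, -h, h₃; 0, 0, 1, h; 0, 1, 0, -h; 0, 0, 0, 1] + 1 : Matrix (Fin 4) (Fin 4) K)
      = !![2, h, -h, h₃; 0, 1, 1, h; 0, 1, 1, -h; 0, 0, 0, 2] := by
    rw [one_fin_four']
    ext i j
    fin_cases i <;> fin_cases j <;> simp [Matrix.vecHead, Matrix.vecTail] <;> norm_num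
  rw [h1, h2]
  have hsq : (!![0, h, -h, h₃; 0, -1, 1, h; 0, 1, -1, -h; 0, 0, 0, 0] : Matrix (Fin 4) (Fin 4) K) ^ 2
      = !![0, -2*h, 2*h, 2*h^2; 0, 2, -2, -2*h; 0, -2, 2, 2*h; 0, 0, 0, 0] := by
    rw [pow_two]
    ext i j
    fin_cases i <;> fin_cases j <;>
      simp [Matrix.mul_apply, Fin.sum_univ_four, Matrix.vecHead, Matrix.vecTail] <;> ring
  rw [hsq]
  constructor
  · ext i j
    fin_cases i <;> fin_cases j <;>
      simp [Matrix.mul_apply, Fin.sum_univ_four, Matrix.vecHead, Matrix.vecTail] <;> ring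
  · intro hne heq
    apply hne
    have := congrFun (congrFun heq 0) 3
    simp [Matrix.mul_apply, Fin.sum_univ_four, Matrix.vecHead, Matrix.vecTail] at this
    linear_combination this / 2
end

section
/- Let R̂ be the 4×4 matrix with rows (1, h₁, h₂, h₃), (0, 0, 1, h₁), (0, 1, 0, h₂), (0, 0, 0, 1) over a field of characteristic 0. Then (R̂ - I)³(R̂ + I) = 0. Moreover, if h₁ + h₂ ≠ 0, then (R̂ - I)²(R̂ + I) ≠ 0. -/
theorem stmt2 (K : Type*) [Field K] [CharZero K] (h₁ h₂ h₃ : K)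
    (Rhat : Matrix (Fin 4) (Fin 4) K)
    (hR : Rhat = !![1, h₁, h₂, h₃; 0, 0, 1, h₁; 0, 1, 0, h₂; 0, 0, 0, 1]) :
    (Rhat - 1) ^ 3 * (Rhat + 1) = 0 ∧
      (h₁ + h₂ ≠ 0 → (Rhat - 1) ^ 2 * (Rhat + 1) ≠ 0) := by
  subst hR
  constructor
  · ext i j
    fin_cases i <;> fin_cases j <;>
      simp [pow_succ, pow_zero, Matrix.mul_apply, Fin.sum_univ_four, Matrix.sub_apply,
        Matrix.add_apply, Matrix.one_apply, Matrix.vecHead, Matrix.vecTail] <;> ring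
  · intro hne heq
    apply hne
    have := congrFun (congrFun heq 0) 3
    simp [pow_succ, pow_zero, Matrix.mul_apply, Fin.sum_univ_four, Matrix.sub_apply,
      Matrix.add_apply, Matrix.one_apply, Matrix.vecHead, Matrix.vecTail] at this
    have h2 : (h₁ + h₂) ^ 2 = 0 := by linear_combination this
    exact pow_eq_zero_iff (n := 2) (by norm_num) |>.mp h2
end

section
/- Let R̂₃ be the 4×4 matrix with rows (1, 0, 0, 1), (0, 0, -1, 0), (0, -1, 0, 0), (0, 0, 0, 1). Then (R̂₃ - I)²(R̂₃ + I) = 0 and (R̂₃ - I)(R̂₃ + I) ≠ 0. -/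
private lemma mul_fin_four {α : Type*} [NonAssocSemiring α]
    (a₁₁ a₁₂ a₁₃ a₁₄ a₂₁ a₂₂ a₂₃ a₂₄ a₃₁ a₃₂ a₃₃ a₃₄ a₄₁ a₄₂ a₄₃ a₄₄
     b₁₁ b₁₂ b₁₃ b₁₄ b₂₁ b₂₂ b₂₃ b₂₄ b₃₁ b₃₂ b₃₃ b₃₄ b₄₁ b₄₂ b₄₃ b₄₄ : α) :
    !![a₁₁, a₁₂, a₁₃, a₁₄; a₂₁, a₂₂, a₂₃, a₂₄; a₃₁, a₃₂, a₃₃, a₃₄; a₄₁, a₄₂, a₄₃, a₄₄] *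
    !![b₁₁, b₁₂, b₁₃, b₁₄; b₂₁, b₂₂, b₂₃, b₂₄; b₃₁, b₃₂, b₃₃, b₃₄; b₄₁, b₄₂, b₄₃, b₄₄] =
    !![a₁₁*b₁₁ + a₁₂*b₂₁ + a₁₃*b₃₁ + a₁₄*b₄₁, a₁₁*b₁₂ + a₁₂*b₂₂ + a₁₃*b₃₂ + a₁₄*b₄₂,
       a₁₁*b₁₃ + a₁₂*b₂₃ + a₁₃*b₃₃ + a₁₄*b₄₃, a₁₁*b₁₄ + a₁₂*b₂₄ + a₁₃*b₃₄ + a₁₄*b₄₄;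
       a₂₁*b₁₁ + a₂₂*b₂₁ + a₂₃*b₃₁ + a₂₄*b₄₁, a₂₁*b₁₂ + a₂₂*b₂₂ + a₂₃*b₃₂ + a₂₄*b₄₂,
       a₂₁*b₁₃ + a₂₂*b₂₃ + a₂₃*b₃₃ + a₂₄*b₄₃, a₂₁*b₁₄ + a₂₂*b₂₄ + a₂₃*b₃₄ + a₂₄*b₄₄;
       a₃₁*b₁₁ + a₃₂*b₂₁ + a₃₃*b₃₁ + a₃₄*b₄₁, a₃₁*b₁₂ + a₃₂*b₂₂ + a₃₃*b₃₂ + a₃₄*b₄₂,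
       a₃₁*b₁₃ + a₃₂*b₂₃ + a₃₃*b₃₃ + a₃₄*b₄₃, a₃₁*b₁₄ + a₃₂*b₂₄ + a₃₃*b₃₄ + a₃₄*b₄₄;
       a₄₁*b₁₁ + a₄₂*b₂₁ + a₄₃*b₃₁ + a₄₄*b₄₁, a₄₁*b₁₂ + a₄₂*b₂₂ + a₄₃*b₃₂ + a₄₄*b₄₂,
       a₄₁*b₁₃ + a₄₂*b₂₃ + a₄₃*b₃₃ + a₄₄*b₄₃, a₄₁*b₁₄ + a₄₂*b₂₄ + a₄₃*b₃₄ + a₄₄*b₄₄] := by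
  ext i j
  fin_cases i <;> fin_cases j <;>
    simp [Matrix.mul_apply, Fin.sum_univ_succ, ← add_assoc]

private lemma one_eq_fin4 {K : Type*} [Field K] :
    (1 : Matrix (Fin 4) (Fin 4) K) = !![1,0,0,0; 0,1,0,0; 0,0,1,0; 0,0,0,1] := by
  ext i j
  fin_cases i <;> fin_cases j <;>
    simp [Matrix.one_apply, Matrix.vecHead, Matrix.vecTail]

private lemma sub_fin4 {K : Type*} [Field K]
    (a₁₁ a₁₂ a₁₃ a₁₄ a₂₁ a₂₂ a₂₃ a₂₄ a₃₁ a₃₂ a₃₃ a₃₄ a₄₁ a₄₂ a₄₃ a₄₄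
     b₁₁ b₁₂ b₁₃ b₁₄ b₂₁ b₂₂ b₂₃ b₂₄ b₃₁ b₃₂ b₃₃ b₃₄ b₄₁ b₄₂ b₄₃ b₄₄ : K) :
    !![a₁₁, a₁₂, a₁₃, a₁₄; a₂₁, a₂₂, a₂₃, a₂₄; a₃₁, a₃₂, a₃₃, a₃₄; a₄₁, a₄₂, a₄₃, a₄₄] -
    !![b₁₁, b₁₂, b₁₃, b₁₄; b₂₁, b₂₂, b₂₃, b₂₄; b₃₁, b₃₂, b₃₃, b₃₄; b₄₁, b₄₂, b₄₃, b₄₄] =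
    !![a₁₁-b₁₁, a₁₂-b₁₂, a₁₃-b₁₃, a₁₄-b₁₄; a₂₁-b₂₁, a₂₂-b₂₂, a₂₃-b₂₃, a₂₄-b₂₄;
       a₃₁-b₃₁, a₃₂-b₃₂, a₃₃-b₃₃, a₃₄-b₃₄; a₄₁-b₄₁, a₄₂-b₄₂, a₄₃-b₄₃, a₄₄-b₄₄] := by
  ext i j
  fin_cases i <;> fin_cases j <;> simp [Matrix.vecHead, Matrix.vecTail]

private lemma add_fin4 {K : Type*} [Field K]
    (a₁₁ a₁₂ a₁₃ a₁₄ a₂₁ a₂₂ a₂₃ a₂₄ a₃₁ a₃₂ a₃₃ a₃₄ a₄₁ a₄₂ a₄₃ a₄₄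
     b₁₁ b₁₂ b₁₃ b₁₄ b₂₁ b₂₂ b₂₃ b₂₄ b₃₁ b₃₂ b₃₃ b₃₄ b₄₁ b₄₂ b₄₃ b₄₄ : K) :
    !![a₁₁, a₁₂, a₁₃, a₁₄; a₂₁, a₂₂, a₂₃, a₂₄; a₃₁, a₃₂, a₃₃, a₃₄; a₄₁, a₄₂, a₄₃, a₄₄] +
    !![b₁₁, b₁₂, b₁₃, b₁₄; b₂₁, b₂₂, b₂₃, b₂₄; b₃₁, b₃₂, b₃₃, b₃₄; b₄₁, b₄₂, b₄₃, b₄₄] =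
    !![a₁₁+b₁₁, a₁₂+b₁₂, a₁₃+b₁₃, a₁₄+b₁₄; a₂₁+b₂₁, a₂₂+b₂₂, a₂₃+b₂₃, a₂₄+b₂₄;
       a₃₁+b₃₁, a₃₂+b₃₂, a₃₃+b₃₃, a₃₄+b₃₄; a₄₁+b₄₁, a₄₂+b₄₂, a₄₃+b₄₃, a₄₄+b₄₄] := by
  ext i j
  fin_cases i <;> fin_cases j <;> simp [Matrix.vecHead, Matrix.vecTail]

theorem stmt3 (K : Type*) [Field K] [CharZero K]
    (Rhat : Matrix (Fin 4) (Fin 4) K)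
    (hR : Rhat = !![1, 0, 0, 1; 0, 0, -1, 0; 0, -1, 0, 0; 0, 0, 0, 1]) :
    (Rhat - 1) ^ 2 * (Rhat + 1) = 0 ∧ (Rhat - 1) * (Rhat + 1) ≠ 0 := by
  subst hR
  rw [one_eq_fin4, sq, sub_fin4, add_fin4]
  constructor
  · rw [mul_fin_four, mul_fin_four]
    norm_num
    ext i j
    fin_cases i <;> fin_cases j <;> simp [Matrix.vecHead, Matrix.vecTail]
  · rw [mul_fin_four]
    norm_num
    intro h
    have := Matrix.ext_iff.2 h 0 3
    simp at this
end

section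
/- The matrices R₁ = ((1,-h,h,h₃),(0,1,0,h),(0,0,1,-h),(0,0,0,1)) (as rows) satisfy the quantum Yang–Baxter equation R₁₂R₁₃R₂₃ = R₂₃R₁₃R₁₂ on the triple tensor product, for all values of h and h₃. -/
set_option maxHeartbeats 4000000


/-- Row-major identification of `Fin 2 × Fin 2` with `Fin 4`,
    `(i,j) ↦ 2*i + j`, matching the enumeration (1,1),(1,2),(2,1),(2,2). -/
def pairIdx : Fin 2 × Fin 2 → Fin 4 := fun p => ⟨2 * p.1.1 + p.2.1, by omega⟩

theorem stmt6 (K : Type*) [Field K] (h h₃ : K) :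
    let R : Matrix (Fin 4) (Fin 4) K :=
      !![1, -h, h, h₃; 0, 1, 0, h; 0, 0, 1, -h; 0, 0, 0, 1]
    let R' : Matrix (Fin 2 × Fin 2) (Fin 2 × Fin 2) K :=
      fun p q => R (pairIdx p) (pairIdx q)
    let R12 : Matrix (Fin 2 × Fin 2 × Fin 2) (Fin 2 × Fin 2 × Fin 2) K :=
      fun p q => R' (p.1, p.2.1) (q.1, q.2.1) * (if p.2.2 = q.2.2 then 1 else 0)
    let R13 : Matrix (Fin 2 × Fin 2 × Fin 2) (Fin 2 × Fin 2 × Fin 2) K :=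
      fun p q => R' (p.1, p.2.2) (q.1, q.2.2) * (if p.2.1 = q.2.1 then 1 else 0)
    let R23 : Matrix (Fin 2 × Fin 2 × Fin 2) (Fin 2 × Fin 2 × Fin 2) K :=
      fun p q => R' (p.2.1, p.2.2) (q.2.1, q.2.2) * (if p.1 = q.1 then 1 else 0)
    R12 * R13 * R23 = R23 * R13 * R12 := by
  intro R R' R12 R13 R23
  ext ⟨a, b, c⟩ ⟨d, e, f⟩
  simp only [Matrix.mul_apply, Fintype.sum_prod_type, Fin.sum_univ_two]
  simp only [Matrix.mul_apply, Fintype.sum_prod_type, Fin.sum_univ_two,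
    R12, R13, R23, R', R, pairIdx]
  fin_cases a <;> fin_cases b <;> fin_cases c <;> fin_cases d <;> fin_cases e <;> fin_cases f <;>
    simp [Matrix.cons_val_zero, Matrix.cons_val_one, Matrix.vecHead, Matrix.vecTail] <;> ring
end

section
/- The matrix R₂ with rows (1, h₁, h₂, h₃), (0, 1, 0, h₂), (0, 0, 1, h₁), (0, 0, 0, 1) satisfies the quantum Yang–Baxter equation R₁₂R₁₃R₂₃ = R₂₃R₁₃R₁₂ for all parameters h₁, h₂, h₃. -/
/-- Entries of the R-matrix as a function of four `Fin 2` indices. -/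
def Ent {K : Type*} [Field K] (h₁ h₂ h₃ : K) : Fin 2 → Fin 2 → Fin 2 → Fin 2 → K
  | 0, 0, 0, 0 => 1
  | 0, 0, 0, 1 => h₁
  | 0, 0, 1, 0 => h₂
  | 0, 0, 1, 1 => h₃
  | 0, 1, 0, 1 => 1
  | 0, 1, 1, 1 => h₂
  | 1, 0, 1, 0 => 1
  | 1, 0, 1, 1 => h₁
  | 1, 1, 1, 1 => 1
  | _, _, _, _ => 0

set_option maxHeartbeats 1600000 in
theorem stmt7 (K : Type*) [Field K] (h₁ h₂ h₃ : K) :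
    let R : Matrix (Fin 4) (Fin 4) K :=
      !![1, h₁, h₂, h₃; 0, 1, 0, h₂; 0, 0, 1, h₁; 0, 0, 0, 1]
    let R' : Matrix (Fin 2 × Fin 2) (Fin 2 × Fin 2) K :=
      fun p q => R (pairIdx p) (pairIdx q)
    let R12 : Matrix (Fin 2 × Fin 2 × Fin 2) (Fin 2 × Fin 2 × Fin 2) K :=
      fun p q => R' (p.1, p.2.1) (q.1, q.2.1) * (if p.2.2 = q.2.2 then 1 else 0)
    let R13 : Matrix (Fin 2 × Fin 2 × Fin 2) (Fin 2 × Fin 2 × Fin 2) K :=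
      fun p q => R' (p.1, p.2.2) (q.1, q.2.2) * (if p.2.1 = q.2.1 then 1 else 0)
    let R23 : Matrix (Fin 2 × Fin 2 × Fin 2) (Fin 2 × Fin 2 × Fin 2) K :=
      fun p q => R' (p.2.1, p.2.2) (q.2.1, q.2.2) * (if p.1 = q.1 then 1 else 0)
    R12 * R13 * R23 = R23 * R13 * R12 := by
  intro R R' R12 R13 R23
  have hE : ∀ a b c d : Fin 2, R' (a, b) (c, d) = Ent h₁ h₂ h₃ a b c d := by
    intro a b c d
    fin_cases a <;> fin_cases b <;> fin_cases c <;> fin_cases d <;>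
      simp [R', R, pairIdx, Ent, Matrix.vecHead, Matrix.vecTail]
  ext ⟨i, j, k⟩ ⟨a, b, c⟩
  simp only [Matrix.mul_apply, Fintype.sum_prod_type, Fin.sum_univ_two]
  simp only [Matrix.mul_apply, Fintype.sum_prod_type, Fin.sum_univ_two,
    R12, R13, R23, hE]
  fin_cases i <;> fin_cases j <;> fin_cases k <;>
    fin_cases a <;> fin_cases b <;> fin_cases c <;>
    simp [Ent] <;> ring
end

section
/- In the unital associative algebra A₂ generated by a, b, c, d with relations c² = 0, ca = ac = 0, dc = cd = 0, da = ad, cb = bc, a² = d² = ad + bc, ab = bd = ba + (h₁-h₂)bc, db = bd + (h₂-h₁)bc, the elements ã = (a+d)/2 and d̃ = (a-d)/2 satisfy: ãd̃ = d̃ã = 0, ãc = cã = d̃c = cd̃ = 0, ãb = bã, bc = cb = 2d̃², d̃³ = 0, and d̃b = -bd̃ = (h₁-h₂)d̃². -/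
theorem stmt10 (K : Type*) [Field K] (hK : (2 : K) ≠ 0)
    (A : Type*) [Ring A] [Algebra K A] (h₁ h₂ : K) (a b c d : A)
    (r1 : c * c = 0) (r2 : c * a = 0) (r3 : a * c = 0)
    (r4 : d * c = 0) (r5 : c * d = 0) (r6 : d * a = a * d)
    (r7 : c * b = b * c) (r8 : a * a = d * d)
    (r9 : d * d = a * d + b * c)
    (r10 : a * b = b * d)
    (r11 : b * d = b * a + (h₁ - h₂) • (b * c))
    (r12 : d * b = b * d + (h₂ - h₁) • (b * c)) :
    let ta : A := (2 : K)⁻¹ • (a + d)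
    let td : A := (2 : K)⁻¹ • (a - d)
    ta * td = 0 ∧ td * ta = 0 ∧
      ta * c = 0 ∧ c * ta = 0 ∧ td * c = 0 ∧ c * td = 0 ∧
      ta * b = b * ta ∧
      b * c = c * b ∧ b * c = (2 : K) • (td * td) ∧
      td * td * td = 0 ∧
      td * b = -(b * td) ∧ td * b = (h₁ - h₂) • (td * td) := by
  intro ta td
  have key1 : (a + d) * (a - d) = 0 := by
    have h : (a + d) * (a - d) = (a * a - d * d) + (d * a - a * d) := by noncomm_ring
    rw [h, r6, r8]; abel
  have key2 : (a - d) * (a + d) = 0 := by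
    have h : (a - d) * (a + d) = (a * a - d * d) + (a * d - d * a) := by noncomm_ring
    rw [h, r6, r8]; abel
  have key3 : (a - d) * (a - d) = b * c + b * c := by
    have h : (a - d) * (a - d) = a * a + d * d - (a * d + d * a) := by noncomm_ring
    rw [h, r6, r8, r9]; abel
  have key4 : (a + d) * c = 0 := by rw [add_mul, r3, r4]; abel
  have key5 : c * (a + d) = 0 := by rw [mul_add, r2, r5]; abel
  have key6 : (a - d) * c = 0 := by rw [sub_mul, r3, r4]; abel
  have key7 : c * (a - d) = 0 := by rw [mul_sub, r2, r5]; abel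
  have key8 : (a + d) * b = b * (a + d) := by
    rw [add_mul, mul_add, r10, r12, r11]; module
  have key9 : (a - d) * b = (h₁ - h₂) • (b * c) := by
    rw [sub_mul, r10, r12, r11]; module
  have key10 : b * (a - d) = -((h₁ - h₂) • (b * c)) := by
    rw [mul_sub, r11]; module
  have key11 : (b * c + b * c) * (a - d) = 0 := by
    rw [add_mul, mul_assoc, key7, mul_zero]; abel
  refine ⟨?_, ?_, ?_, ?_, ?_, ?_, ?_, ?_, ?_, ?_, ?_, ?_⟩
  · show (2 : K)⁻¹ • (a + d) * ((2 : K)⁻¹ • (a - d)) = 0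
    rw [smul_mul_assoc, mul_smul_comm, key1, smul_zero, smul_zero]
  · show (2 : K)⁻¹ • (a - d) * ((2 : K)⁻¹ • (a + d)) = 0
    rw [smul_mul_assoc, mul_smul_comm, key2, smul_zero, smul_zero]
  · show (2 : K)⁻¹ • (a + d) * c = 0
    rw [smul_mul_assoc, key4, smul_zero]
  · show c * ((2 : K)⁻¹ • (a + d)) = 0
    rw [mul_smul_comm, key5, smul_zero]
  · show (2 : K)⁻¹ • (a - d) * c = 0
    rw [smul_mul_assoc, key6, smul_zero]
  · show c * ((2 : K)⁻¹ • (a - d)) = 0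
    rw [mul_smul_comm, key7, smul_zero]
  · show (2 : K)⁻¹ • (a + d) * b = b * ((2 : K)⁻¹ • (a + d))
    rw [smul_mul_assoc, mul_smul_comm, key8]
  · exact r7.symm
  · show b * c = (2 : K) • ((2 : K)⁻¹ • (a - d) * ((2 : K)⁻¹ • (a - d)))
    rw [smul_mul_assoc, mul_smul_comm, key3]
    match_scalars
    field_simp
    norm_num
  · show (2 : K)⁻¹ • (a - d) * ((2 : K)⁻¹ • (a - d)) * ((2 : K)⁻¹ • (a - d)) = 0
    simp only [smul_mul_assoc, mul_smul_comm]
    rw [key3, key11]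
    simp
  · show (2 : K)⁻¹ • (a - d) * b = -(b * ((2 : K)⁻¹ • (a - d)))
    rw [smul_mul_assoc, mul_smul_comm, key9, key10]
    module
  · show (2 : K)⁻¹ • (a - d) * b = (h₁ - h₂) • ((2 : K)⁻¹ • (a - d) * ((2 : K)⁻¹ • (a - d)))
    simp only [smul_mul_assoc, mul_smul_comm]
    rw [key9, key3]
    match_scalars
    field_simp
    ring
end

section
/- The bialgebra A₁ admits no antipode: there is no linear map γ : A₁ → A₁ satisfying the antipode axiom m∘(id⊗γ)∘δ = i∘ε. More precisely, if γ were an antipode then applying the axiom to d gives c·γ(b) + d·γ(d) = 1, and multiplying on the left by c yields c = 0, contradicting c ≠ 0 in A₁. -/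
/-- The exotic bialgebra `A₁` has no antipode: in any algebra with elements
`a,b,c,d` satisfying the `A₁` relations and `c ≠ 0`, there is no map `γ` such
that the antipode axiom applied to `d` holds, i.e. `c·γ(b) + d·γ(d) = 1`. -/
theorem stmt11 (K : Type*) [Field K]
    (A : Type*) [Ring A] [Algebra K A] (h : K) (a b c d : A)
    (h1 : c * c = 0) (h2 : c * a = 0) (h3 : a * c = 0)
    (h4 : d * c = 0) (h5 : c * d = 0) (h6 : d * a = a * d)
    (h7 : c * b = b * c) (h8 : a * a = d * d)
    (h9 : a * b = b * a + h • (a * a + b * c - a * d))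
    (h10 : d * b = b * d - h • (a * a + b * c - a * d))
    (hc : c ≠ 0) :
    ¬ ∃ γ : A → A, c * γ b + d * γ d = 1 := by
  rintro ⟨γ, hγ⟩
  have : c * (c * γ b + d * γ d) = c * 1 := by rw [hγ]
  rw [mul_add, ← mul_assoc, ← mul_assoc, h1, h5, zero_mul, zero_mul, add_zero, mul_one] at this
  exact hc this.symm
end

section
/- The bialgebra U₁ admits no antipode: if γ satisfied the antipode axiom, then applying it to E would give E·γ(E) = 1, and left multiplication by any Z ∈ {Ã,B,C,D̃} (which satisfies ZE = 0) would force Z = 0, contradicting that Z ≠ 0 in U₁. -/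
/-- The dual bialgebra `U₁` has no antipode: with generators `A,B,C,D,E`
satisfying `Z·E = E·Z = 0` for `Z ∈ {A,B,C,D}` and the generators nonzero,
there is no map `γ` with `E·γ(E) = 1` (the antipode axiom applied to `E`). -/
theorem stmt15 (U : Type*) [Ring U] (A B C D E : U)
    (r1 : E * A = 0) (r2 : A * E = 0)
    (r3 : E * B = 0) (r4 : B * E = 0)
    (r5 : E * C = 0) (r6 : C * E = 0)
    (r7 : E * D = 0) (r8 : D * E = 0)
    (hA : A ≠ 0) (hB : B ≠ 0) (hC : C ≠ 0) (hD : D ≠ 0) :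
    ¬ ∃ γ : U → U, E * γ E = 1 := by
  rintro ⟨γ, h⟩
  apply hA
  calc A = A * (E * γ E) := by rw [h, mul_one]
    _ = 0 := by rw [← mul_assoc, r2, zero_mul]
end

section
/- Define δ on generators by δ(B) = B⊗1 + F₊F₋⊗B and δ(F±) = F±⊗F±, with ε(B) = 0, ε(F±) = 1. Then these satisfy the counit axioms, and δ is coassociative on B: (δ⊗id)(δ(B)) = (id⊗δ)(δ(B)) = B⊗1⊗1 + F₊F₋⊗B⊗1 + F₊F₋⊗F₊F₋⊗B. -/
open TensorProduct

noncomputable section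

variable (K : Type*) [CommRing K]

/-- Generators: 0 = B, 1 = F₊, 2 = F₋. -/
abbrev U3 := FreeAlgebra K (Fin 3)

noncomputable def Y (i : Fin 3) : U3 K := FreeAlgebra.ι K i

/-- The coproduct: `δ(B) = B⊗1 + F₊F₋⊗B`, `δ(F±) = F±⊗F±`. -/
noncomputable def deltaU3 : U3 K →ₐ[K] U3 K ⊗[K] U3 K :=
  FreeAlgebra.lift K
    ![Y K 0 ⊗ₜ 1 + (Y K 1 * Y K 2) ⊗ₜ Y K 0,
      Y K 1 ⊗ₜ Y K 1,
      Y K 2 ⊗ₜ Y K 2]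

/-- The counit: `ε(B) = 0`, `ε(F±) = 1`. -/
noncomputable def epsU3 : U3 K →ₐ[K] K :=
  FreeAlgebra.lift K ![0, 1, 1]

lemma deltaY (i : Fin 3) : deltaU3 K (Y K i) =
    ![Y K 0 ⊗ₜ 1 + (Y K 1 * Y K 2) ⊗ₜ Y K 0,
      Y K 1 ⊗ₜ Y K 1,
      Y K 2 ⊗ₜ Y K 2] i := by
  simp [deltaU3, Y]

lemma epsY (i : Fin 3) : epsU3 K (Y K i) = ![0, 1, 1] i := by
  simp [epsU3, Y]

theorem stmt17 :
    (∀ i : Fin 3,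
      (Algebra.TensorProduct.lid K (U3 K))
          ((Algebra.TensorProduct.map (epsU3 K) (AlgHom.id K (U3 K)))
            (deltaU3 K (Y K i))) = Y K i ∧
      (Algebra.TensorProduct.rid K K (U3 K))
          ((Algebra.TensorProduct.map (AlgHom.id K (U3 K)) (epsU3 K))
            (deltaU3 K (Y K i))) = Y K i) ∧
    (Algebra.TensorProduct.assoc K K K (U3 K) (U3 K) (U3 K))
        ((Algebra.TensorProduct.map (deltaU3 K) (AlgHom.id K (U3 K)))
          (deltaU3 K (Y K 0)))
      = Y K 0 ⊗ₜ ((1 : U3 K) ⊗ₜ (1 : U3 K))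
        + (Y K 1 * Y K 2) ⊗ₜ (Y K 0 ⊗ₜ (1 : U3 K))
        + (Y K 1 * Y K 2) ⊗ₜ ((Y K 1 * Y K 2) ⊗ₜ Y K 0) ∧
    (Algebra.TensorProduct.map (AlgHom.id K (U3 K)) (deltaU3 K))
        (deltaU3 K (Y K 0))
      = Y K 0 ⊗ₜ ((1 : U3 K) ⊗ₜ (1 : U3 K))
        + (Y K 1 * Y K 2) ⊗ₜ (Y K 0 ⊗ₜ (1 : U3 K))
        + (Y K 1 * Y K 2) ⊗ₜ ((Y K 1 * Y K 2) ⊗ₜ Y K 0) := by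
  refine ⟨fun i => ?_, ?_, ?_⟩
  · fin_cases i <;>
      simp [deltaY, epsY, TensorProduct.smul_tmul', tmul_add, add_tmul, mul_comm]
  · rw [deltaY]
    simp only [Matrix.cons_val_zero, map_add, Algebra.TensorProduct.map_tmul,
      AlgHom.coe_id, id_eq, deltaY, map_mul, Matrix.cons_val_one, Matrix.head_cons,
      Matrix.cons_val_two, Matrix.tail_cons, Algebra.TensorProduct.tmul_mul_tmul,
      add_tmul, map_add, Algebra.TensorProduct.assoc_tmul]
  · rw [deltaY]
    simp only [Matrix.cons_val_zero, map_add, Algebra.TensorProduct.map_tmul,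
      AlgHom.coe_id, id_eq, deltaY, map_mul, Matrix.cons_val_one, Matrix.head_cons,
      Matrix.cons_val_two, Matrix.tail_cons, Algebra.TensorProduct.tmul_mul_tmul,
      tmul_add, map_one, mul_one, one_mul, Algebra.TensorProduct.one_def]
    abel

end
end
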